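/- Suppose b > 0, α > 0, β₁k₁ > b + α, α + b ≤ 1, and β₁k₁ − b − α ≤ 1. Set A = b(β₁k₁−b−α)/(β₁(b+α)), and suppose (b−β₁A)² − 4β₁Aα < 0. Then the two complex roots μ = 1 − (b+β₁A)/2 ± (i/2)·√(4β₁Aα − (b−β₁A)²) of the quadratic μ² − (2−b−β₁A)μ + β₁Aα + (1−b)(1−β₁A) = 0 satisfy |μ|² = 1 − β₁A(1−α) − b(1−β₁A) < 1. -/

import Mathlib

theorem complex_roots_in_unit_disc (b α β₁ k₁ A : ℝ)
    (hb : 0 < b) (hα : 0 < α)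
    (hgt : β₁ * k₁ > b + α) (h1 : α + b ≤ 1) (h2 : β₁ * k₁ - b - α ≤ 1)
    (hA : A = b * (β₁ * k₁ - b - α) / (β₁ * (b + α)))
    (hD : (b - β₁ * A) ^ 2 - 4 * β₁ * A * α < 0) :
    ∀ μ ∈ ({(1 : ℂ) - (b + β₁ * A) / 2 +
              Complex.I / 2 * Real.sqrt (4 * β₁ * A * α - (b - β₁ * A) ^ 2),
            (1 : ℂ) - (b + β₁ * A) / 2 -
              Complex.I / 2 * Real.sqrt (4 * β₁ * A * α - (b - β₁ * A) ^ 2)} :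
            Set ℂ),
      μ ^ 2 - (2 - b - β₁ * A) * μ + β₁ * A * α + (1 - b) * (1 - β₁ * A) = 0 ∧
      (‖μ‖) ^ 2 = 1 - β₁ * A * (1 - α) - b * (1 - β₁ * A) ∧
      (‖μ‖) ^ 2 < 1 := by
  have hβ₁ : β₁ ≠ 0 := by
    intro h; rw [h] at hgt; simp at hgt; linarith
  have hD' : 0 ≤ 4 * β₁ * A * α - (b - β₁ * A) ^ 2 := by linarith
  have hB0 : 0 < β₁ * A := by nlinarith [sq_nonneg (b - β₁ * A)]
  have hBeq : β₁ * A = b * (β₁ * k₁ - b - α) / (b + α) := by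
    rw [hA]; field_simp
  have hB1 : β₁ * A < 1 := by
    rw [hBeq, div_lt_one (by linarith)]
    nlinarith
  set s : ℝ := Real.sqrt (4 * β₁ * A * α - (b - β₁ * A) ^ 2) with hsdef
  have hs : s ^ 2 = 4 * β₁ * A * α - (b - β₁ * A) ^ 2 := Real.sq_sqrt hD'
  have hsC : (s : ℂ) ^ 2 = 4 * (β₁ : ℂ) * A * α - ((b : ℂ) - β₁ * A) ^ 2 := by
    have := congrArg (fun t : ℝ => (t : ℂ)) hs
    push_cast at this
    exact this
  have key : ∀ y : ℝ, y ^ 2 = (s / 2) ^ 2 →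
      ∀ μ : ℂ, μ = (↑(1 - (b + β₁ * A) / 2) : ℂ) + (y : ℝ) * Complex.I →
      μ ^ 2 - (2 - b - β₁ * A) * μ + β₁ * A * α + (1 - b) * (1 - β₁ * A) = 0 ∧
      (‖μ‖) ^ 2 = 1 - β₁ * A * (1 - α) - b * (1 - β₁ * A) ∧
      (‖μ‖) ^ 2 < 1 := by
    intro y hy μ hμ
    have hyC : (y : ℂ) ^ 2 = ((s : ℂ) / 2) ^ 2 := by
      have := congrArg (fun t : ℝ => (t : ℂ)) hy
      push_cast at this
      exact this
    have habs : (‖μ‖) ^ 2 = (1 - (b + β₁ * A) / 2) ^ 2 + y ^ 2 := by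
      rw [hμ, Complex.sq_norm, Complex.normSq_add_mul_I]
    have hval : (‖μ‖) ^ 2 = 1 - β₁ * A * (1 - α) - b * (1 - β₁ * A) := by
      rw [habs, hy]
      nlinarith [hs]
    refine ⟨?_, hval, ?_⟩
    · rw [hμ]
      push_cast
      linear_combination ((y:ℂ))^2 * Complex.I_sq - hyC - (1/4 : ℂ) * hsC
    · rw [hval]
      nlinarith [mul_pos hB0 (by linarith : (0:ℝ) < 1 - α),
        mul_pos hb (by linarith : (0:ℝ) < 1 - β₁ * A)]
  intro μ hμ
  rcases hμ with hμ | hμ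
  · exact key (s / 2) rfl μ (by rw [hμ]; push_cast; ring)
  · exact key (-(s / 2)) (by ring) μ (by rw [hμ]; push_cast; ring)
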